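/- Let G be a finite abelian group and H a finite group (possibly nonabelian). A function f: G → H is perfect nonlinear if and only if for every α ∈ G and every nontrivial irreducible unitary representation ρ: H → U(W) of H, the endomorphism S(α) = Σ_{x∈G} χ_α(x) ρ(f(x)) satisfies S(α) ∘ S(α)* = |G| · Id_W. -/

import Mathlib

set_option linter.unusedSectionVars false
set_option maxHeartbeats 2000000

/-- `f` is balanced: every fiber has cardinality `|X| / |H|`. -/
def IsBalanced {X H : Type} [Fintype X] [Fintype H] (f : X → H) : Prop :=
  ∀ y : H, Nat.card {x : X // f x = y} * Fintype.card H = Fintype.card X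

/-- `f : G → H` is perfect nonlinear: every nontrivial left derivative is balanced. -/
def IsPerfectNonlinear {G H : Type} [Group G] [Fintype G] [Group H] [Fintype H]
    (f : G → H) : Prop :=
  ∀ α : G, α ≠ 1 → IsBalanced (fun x : G => f (α * x) * (f x)⁻¹)

open scoped ComplexConjugate

namespace Stmt15Aux

variable {G H : Type} [CommGroup G] [Fintype G] [Group H] [Fintype H]

/-- Sum of a nontrivial ℂ-valued homomorphism over a finite group vanishes. -/
lemma sum_hom_eq_zero {Γ : Type} [Group Γ] [Fintype Γ] (φ : Γ →* ℂ)
    (h : ∃ g, φ g ≠ 1) : ∑ g : Γ, φ g = 0 := by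
  obtain ⟨g₀, hg₀⟩ := h
  have h1 : φ g₀ * ∑ g : Γ, φ g = ∑ g : Γ, φ g := by
    rw [Finset.mul_sum]
    exact Fintype.sum_equiv (Equiv.mulLeft g₀) _ _ (fun g => by
      simp [Equiv.mulLeft, map_mul])
  have h2 : (φ g₀ - 1) * ∑ g : Γ, φ g = 0 := by rw [sub_mul, one_mul, h1, sub_self]
  rcases mul_eq_zero.mp h2 with h3 | h3
  · exact absurd (sub_eq_zero.mp h3) hg₀
  · exact h3

lemma char_norm_one (χ : G ≃* (G →* ℂ)) (α x : G) : ‖χ α x‖ = 1 := by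
  have hpow : (χ α x) ^ (Fintype.card G) = 1 := by
    rw [← map_pow, pow_card_eq_one, map_one]
  exact Complex.norm_eq_one_of_pow_eq_one hpow Fintype.card_ne_zero

lemma char_conj (χ : G ≃* (G →* ℂ)) (α x : G) : conj (χ α x) = χ α x⁻¹ := by
  rw [← Complex.inv_eq_conj (char_norm_one χ α x)]
  have : χ α x * χ α x⁻¹ = 1 := by rw [← map_mul, mul_inv_cancel, map_one]
  exact (eq_inv_of_mul_eq_one_left (by rwa [mul_comm] at this)).symm

lemma char_ne_zero (χ : G ≃* (G →* ℂ)) (α x : G) : χ α x ≠ 0 := by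
  intro h
  have := char_norm_one χ α x
  rw [h] at this
  simp at this

/-- Evaluation at `δ` as a homomorphism in the index of the character. -/
def evChar (χ : G ≃* (G →* ℂ)) (δ : G) : G →* ℂ where
  toFun α := χ α δ
  map_one' := by simp
  map_mul' a b := by simp [map_mul]

/-- Orthogonality: the sum over all characters at a nontrivial point vanishes. -/
lemma char_sum (χ : G ≃* (G →* ℂ)) {δ : G} (hδ : δ ≠ 1) : ∑ α : G, χ α δ = 0 := by
  obtain ⟨φ, hφ⟩ := CommGroup.exists_apply_ne_one_of_hasEnoughRootsOfUnity G ℂ hδ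
  refine sum_hom_eq_zero (evChar χ δ) ⟨χ.symm ((Units.coeHom ℂ).comp φ), ?_⟩
  have : χ (χ.symm ((Units.coeHom ℂ).comp φ)) = (Units.coeHom ℂ).comp φ :=
    χ.apply_symm_apply _
  show χ _ δ ≠ 1
  rw [this]
  intro hone
  apply hφ
  ext
  exact hone

variable {W : Type} [NormedAddCommGroup W] [InnerProductSpace ℂ W] [FiniteDimensional ℂ W]

lemma adjoint_rep (ρ : Representation ℂ H W)
    (hun : ∀ (h : H) (u v : W), (inner ℂ (ρ h u) (ρ h v) : ℂ) = inner ℂ u v) (h : H) :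
    LinearMap.adjoint (ρ h) = ρ h⁻¹ := by
  symm
  rw [LinearMap.eq_adjoint_iff]
  intro u v
  have : ρ h (ρ h⁻¹ u) = u := by
    rw [← Module.End.mul_apply, ← map_mul, mul_inv_cancel, map_one, Module.End.one_apply]
  calc (inner ℂ (ρ h⁻¹ u) v : ℂ) = inner ℂ (ρ h (ρ h⁻¹ u)) (ρ h v) := (hun h _ _).symm
    _ = inner ℂ u (ρ h v) := by rw [this]

/-- Sum over the group of a nontrivial irreducible representation is zero. -/
lemma sum_rep_eq_zero (ρ : Representation ℂ H W)
    (hirr : ∀ U : Submodule ℂ W, (∀ (h : H) (w : W), w ∈ U → ρ h w ∈ U) → U = ⊥ ∨ U = ⊤)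
    (hne : ρ ≠ 1) : ∑ h : H, ρ h = 0 := by
  set P : W →ₗ[ℂ] W := ∑ h : H, ρ h with hP
  have hfix : ∀ (g : H) (u : W), ρ g (P u) = P u := by
    intro g u
    have : ρ g * P = P := by
      rw [hP, Finset.mul_sum]
      have : ∀ h : H, ρ g * ρ h = ρ (g * h) := fun h => (map_mul ρ g h).symm
      simp_rw [this]
      exact Fintype.sum_equiv (Equiv.mulLeft g) _ _ (fun h => by simp [Equiv.mulLeft])
    conv_rhs => rw [← this]
    rw [Module.End.mul_apply]
  have hinv : ∀ (h : H) (w : W), w ∈ LinearMap.range P → ρ h w ∈ LinearMap.range P := by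
    rintro h w ⟨u, rfl⟩
    rw [hfix]
    exact ⟨u, rfl⟩
  rcases hirr (LinearMap.range P) hinv with hbot | htop
  · exact LinearMap.range_eq_bot.mp hbot
  · exfalso
    apply hne
    have hsurj := LinearMap.range_eq_top.mp htop
    ext h w
    obtain ⟨u, rfl⟩ := hsurj w
    simpa using hfix h u

/-- Fiber decomposition of a sum over the source. -/
lemma sum_comp_eq {M : Type} [AddCommMonoid M] (D : G → H) (g : H → M) :
    ∑ x : G, g (D x) = ∑ h : H, (Nat.card {x : G // D x = h}) • g h := by
  classical
  rw [← Finset.sum_fiberwise Finset.univ D (fun x => g (D x))]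
  refine Finset.sum_congr rfl (fun h _ => ?_)
  have : ∑ x ∈ Finset.filter (fun x => D x = h) Finset.univ, g (D x)
      = ∑ _x ∈ Finset.filter (fun x => D x = h) Finset.univ, g h :=
    Finset.sum_congr rfl (fun x hx => by rw [(Finset.mem_filter.mp hx).2])
  rw [this, Finset.sum_const, Nat.card_eq_fintype_card, Fintype.card_subtype]

/-- Key expansion of `S(α) ∘ S(α)*`. -/
lemma key_expand (χ : G ≃* (G →* ℂ)) (f : G → H) (ρ : Representation ℂ H W)
    (hun : ∀ (h : H) (u v : W), (inner ℂ (ρ h u) (ρ h v) : ℂ) = inner ℂ u v) (α : G) :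
    (∑ x : G, χ α x • ρ (f x)) ∘ₗ LinearMap.adjoint (∑ x : G, χ α x • ρ (f x))
      = ∑ β : G, χ α β • ∑ y : G, ρ (f (β * y) * (f y)⁻¹) := by
  have hadj : LinearMap.adjoint (∑ x : G, χ α x • ρ (f x))
      = ∑ y : G, conj (χ α y) • ρ ((f y)⁻¹) := by
    rw [map_sum]
    refine Finset.sum_congr rfl (fun y _ => ?_)
    rw [map_smulₛₗ, adjoint_rep ρ hun]
  rw [hadj, ← Module.End.mul_eq_comp, Finset.sum_mul_sum]
  have hterm : ∀ x y : G, (χ α x • ρ (f x)) * (conj (χ α y) • ρ ((f y)⁻¹))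
      = (χ α x * χ α y⁻¹) • ρ (f x * (f y)⁻¹) := by
    intro x y
    rw [smul_mul_smul_comm, char_conj, ← map_mul ρ]
  simp_rw [hterm]
  rw [Finset.sum_comm]
  have hre : ∀ y : G, ∑ x : G, (χ α x * χ α y⁻¹) • ρ (f x * (f y)⁻¹)
      = ∑ β : G, χ α β • ρ (f (β * y) * (f y)⁻¹) := by
    intro y
    refine (Fintype.sum_equiv (Equiv.mulRight y) _ _ (fun β => ?_)).symm
    have hcoef : χ α (β * y) * χ α y⁻¹ = χ α β := by
      rw [← map_mul (χ α), mul_inv_cancel_right]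
    simp only [Equiv.coe_mulRight]
    rw [hcoef]
  simp_rw [hre]
  rw [Finset.sum_comm]
  refine Finset.sum_congr rfl (fun β _ => ?_)
  rw [Finset.smul_sum]

/-- Fourier extraction: if all character sums give `T 1`, then `T γ = 0` for nontrivial `γ`. -/
lemma fourier_extract {V : Type} [AddCommGroup V] [Module ℂ V] (χ : G ≃* (G →* ℂ))
    (T : G → V) (hT : ∀ a : G, ∑ β : G, χ a β • T β = T 1) {γ : G} (hγ : γ ≠ 1) :
    T γ = 0 := by
  have h1 : ∑ a : G, χ a γ⁻¹ • ∑ β : G, χ a β • T β = (Fintype.card G : ℂ) • T γ := by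
    have e1 : ∀ a : G, χ a γ⁻¹ • ∑ β : G, χ a β • T β = ∑ β : G, χ a (γ⁻¹ * β) • T β := by
      intro a
      rw [Finset.smul_sum]
      exact Finset.sum_congr rfl (fun β _ => by rw [smul_smul, ← map_mul (χ a)])
    simp_rw [e1]
    rw [Finset.sum_comm]
    have e2 : ∀ β : G, ∑ a : G, χ a (γ⁻¹ * β) • T β = (∑ a : G, χ a (γ⁻¹ * β)) • T β :=
      fun β => (Finset.sum_smul).symm
    simp_rw [e2]
    rw [Fintype.sum_eq_single γ (fun β hβ => by
      rw [char_sum χ (show γ⁻¹ * β ≠ 1 from fun hc =>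
        hβ (inv_mul_eq_one.mp hc).symm), zero_smul])]
    rw [inv_mul_cancel, show ∑ a : G, χ a (1 : G) = (Fintype.card G : ℂ) by
      simp [map_one]]
  have h2 : ∑ a : G, χ a γ⁻¹ • ∑ β : G, χ a β • T β = 0 := by
    simp_rw [hT]
    rw [← Finset.sum_smul, char_sum χ (inv_ne_one.mpr hγ), zero_smul]
  rw [h2] at h1
  have hcard : (Fintype.card G : ℂ) ≠ 0 := Nat.cast_ne_zero.mpr Fintype.card_ne_zero
  exact (smul_eq_zero.mp h1.symm).resolve_left hcard

/-- A balanced function composed with a nontrivial irreducible representation sums to zero. -/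
lemma balanced_sum_eq_zero (ρ : Representation ℂ H W)
    (hirr : ∀ U : Submodule ℂ W, (∀ (h : H) (w : W), w ∈ U → ρ h w ∈ U) → U = ⊥ ∨ U = ⊤)
    (hne : ρ ≠ 1) {D : G → H}
    (hD : ∀ y : H, Nat.card {x : G // D x = y} * Fintype.card H = Fintype.card G) :
    ∑ x : G, ρ (D x) = 0 := by
  have h1 : (Fintype.card H) • (∑ x : G, ρ (D x)) = 0 := by
    rw [sum_comp_eq D (fun h => ρ h), Finset.smul_sum]
    have : ∀ h : H, (Fintype.card H) • ((Nat.card {x : G // D x = h}) • ρ h)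
        = (Fintype.card G) • ρ h := by
      intro h
      rw [smul_smul, mul_comm, hD h]
    simp_rw [this]
    rw [← Finset.smul_sum, sum_rep_eq_zero ρ hirr hne, smul_zero]
  have h2 : (Fintype.card H : ℂ) • (∑ x : G, ρ (D x)) = 0 := by
    rw [Nat.cast_smul_eq_nsmul]; exact h1
  exact (smul_eq_zero.mp h2).resolve_left (Nat.cast_ne_zero.mpr Fintype.card_ne_zero)

/-- Restriction of a representation to an invariant submodule. -/
def resRep {W : Type} [AddCommGroup W] [Module ℂ W] (ρ : Representation ℂ H W)
    (U : Submodule ℂ W) (hU : ∀ (h : H) (w : W), w ∈ U → ρ h w ∈ U) :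
    Representation ℂ H U where
  toFun h := (ρ h).restrict (fun w hw => hU h w hw)
  map_one' := by
    ext w
    simp [LinearMap.restrict_apply]
  map_mul' a b := by
    ext w
    simp [LinearMap.restrict_apply, map_mul]

lemma resRep_coe {W : Type} [AddCommGroup W] [Module ℂ W] (ρ : Representation ℂ H W)
    (U : Submodule ℂ W) (hU : ∀ (h : H) (w : W), w ∈ U → ρ h w ∈ U) (h : H) (u : U) :
    (resRep ρ U hU h u : W) = ρ h u := rfl

/-- Main induction: derivative sums vanish on unitary reps without nonzero fixed vectors. -/
lemma lemB (χ : G ≃* (G →* ℂ)) (f : G → H)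
    (hyp : ∀ (α : G) (W : Type) [NormedAddCommGroup W] [InnerProductSpace ℂ W]
      [FiniteDimensional ℂ W] (ρ : Representation ℂ H W),
      (Nontrivial W ∧ ∀ U : Submodule ℂ W,
        (∀ (h : H) (w : W), w ∈ U → ρ h w ∈ U) → U = ⊥ ∨ U = ⊤) →
      (∀ (h : H) (u v : W), (inner ℂ (ρ h u) (ρ h v) : ℂ) = inner ℂ u v) → ρ ≠ 1 →
      (∑ x : G, χ α x • ρ (f x)) ∘ₗ LinearMap.adjoint (∑ x : G, χ α x • ρ (f x))
        = (Fintype.card G : ℂ) • (LinearMap.id : W →ₗ[ℂ] W))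
    {α : G} (hα : α ≠ 1) :
    ∀ (n : ℕ) (W : Type) [NormedAddCommGroup W] [InnerProductSpace ℂ W]
      [FiniteDimensional ℂ W] (ρ : Representation ℂ H W), Module.finrank ℂ W = n →
      (∀ (h : H) (u v : W), (inner ℂ (ρ h u) (ρ h v) : ℂ) = inner ℂ u v) →
      (∀ w : W, (∀ h : H, ρ h w = w) → w = 0) →
      ∑ x : G, ρ (f (α * x) * (f x)⁻¹) = 0 := by
  intro n
  induction n using Nat.strong_induction_on with
  | _ n IH =>
  intro W _ _ _ ρ hrank hun hfix
  by_cases hss : Subsingleton W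
  · exact LinearMap.ext fun w => Subsingleton.elim _ _
  have hnt : Nontrivial W := not_subsingleton_iff_nontrivial.mp hss
  by_cases hirr : ∀ U : Submodule ℂ W, (∀ (h : H) (w : W), w ∈ U → ρ h w ∈ U) → U = ⊥ ∨ U = ⊤
  · -- irreducible case
    have hne : ρ ≠ 1 := by
      intro hone
      obtain ⟨w, w', hww⟩ := hnt
      have hz : ∀ v : W, v = 0 := fun v => hfix v (fun h => by rw [hone]; rfl)
      exact hww (by rw [hz w, hz w'])
    set T : G → (W →ₗ[ℂ] W) := fun β => ∑ y : G, ρ (f (β * y) * (f y)⁻¹) with hTdef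
    have hT1 : T 1 = (Fintype.card G : ℂ) • (LinearMap.id : W →ₗ[ℂ] W) := by
      have : ∀ y : G, ρ (f (1 * y) * (f y)⁻¹) = LinearMap.id := by
        intro y
        rw [one_mul, mul_inv_cancel, map_one]
        rfl
      rw [hTdef]
      simp only [this, Finset.sum_const, Finset.card_univ, smul_eq_mul]
      rw [← Nat.cast_smul_eq_nsmul ℂ]
    have hT : ∀ a : G, ∑ β : G, χ a β • T β = T 1 := by
      intro a
      rw [hT1, ← key_expand χ f ρ hun a]
      exact hyp a W ρ ⟨hnt, hirr⟩ hun hne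
    exact fourier_extract χ T hT hα
  · -- reducible case
    push_neg at hirr
    obtain ⟨U, hUinv, hUbot, hUtop⟩ := hirr
    have hOinv : ∀ (h : H) (w : W), w ∈ Uᗮ → ρ h w ∈ Uᗮ := by
      intro h w hw
      rw [Submodule.mem_orthogonal]
      intro u hu
      have hu' : u = ρ h (ρ h⁻¹ u) := by
        rw [← Module.End.mul_apply, ← map_mul, mul_inv_cancel, map_one, Module.End.one_apply]
      calc (inner ℂ u (ρ h w) : ℂ) = inner ℂ (ρ h (ρ h⁻¹ u)) (ρ h w) := by rw [← hu']
        _ = inner ℂ (ρ h⁻¹ u) w := hun h _ _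
        _ = 0 := hw _ (hUinv h⁻¹ u hu)
    have key : ∀ (p : Submodule ℂ W) (hp : ∀ (h : H) (w : W), w ∈ p → ρ h w ∈ p),
        Module.finrank ℂ p < n → ∀ u ∈ p, (∑ x : G, ρ (f (α * x) * (f x)⁻¹)) u = 0 := by
      intro p hp hplt u hu
      have hunp : ∀ (h : H) (u v : p),
          (inner ℂ ((resRep ρ p hp) h u) ((resRep ρ p hp) h v) : ℂ) = inner ℂ u v := by
        intro h u v
        rw [Submodule.coe_inner, Submodule.coe_inner, resRep_coe, resRep_coe]
        exact hun h _ _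
      have hfixp : ∀ w : p, (∀ h : H, (resRep ρ p hp) h w = w) → w = 0 := by
        intro w hw
        have : ∀ h : H, ρ h (w : W) = (w : W) := by
          intro h
          have := congrArg (Subtype.val) (hw h)
          rwa [resRep_coe] at this
        exact Subtype.ext (hfix _ this)
      have hz := IH (Module.finrank ℂ p) hplt p (resRep ρ p hp) rfl hunp hfixp
      rw [LinearMap.sum_apply]
      have hterm : ∀ x : G, ρ (f (α * x) * (f x)⁻¹) u
          = ((resRep ρ p hp (f (α * x) * (f x)⁻¹)) ⟨u, hu⟩ : W) := fun x => rfl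
      simp_rw [hterm]
      rw [← Submodule.coe_sum, ← LinearMap.sum_apply, hz]
      rfl
    have hfr : Module.finrank ℂ U + Module.finrank ℂ Uᗮ = n := by
      rw [← hrank]; exact Submodule.finrank_add_finrank_orthogonal U
    have hUpos : 0 < Module.finrank ℂ U :=
      Nat.pos_of_ne_zero (fun h0 => hUbot (Submodule.finrank_eq_zero.mp h0))
    have hUlt : Module.finrank ℂ U < n := by
      rw [← hrank]; exact Submodule.finrank_lt hUtop
    have hOlt : Module.finrank ℂ Uᗮ < n := by omega
    ext w
    obtain ⟨u, hu, v, hv, rfl⟩ := U.exists_add_mem_mem_orthogonal w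
    rw [map_add, key U hUinv hUlt u hu, key Uᗮ hOinv hOlt v hv, add_zero]
    rfl


/-- Wrapper of `lemB` for an invariant subspace of an ambient unitary representation. -/
lemma lemB_sub (χ : G ≃* (G →* ℂ)) (f : G → H)
    (hyp : ∀ (α : G) (W : Type) [NormedAddCommGroup W] [InnerProductSpace ℂ W]
      [FiniteDimensional ℂ W] (ρ : Representation ℂ H W),
      (Nontrivial W ∧ ∀ U : Submodule ℂ W,
        (∀ (h : H) (w : W), w ∈ U → ρ h w ∈ U) → U = ⊥ ∨ U = ⊤) →
      (∀ (h : H) (u v : W), (inner ℂ (ρ h u) (ρ h v) : ℂ) = inner ℂ u v) → ρ ≠ 1 →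
      (∑ x : G, χ α x • ρ (f x)) ∘ₗ LinearMap.adjoint (∑ x : G, χ α x • ρ (f x))
        = (Fintype.card G : ℂ) • (LinearMap.id : W →ₗ[ℂ] W))
    {α : G} (hα : α ≠ 1) {E : Type} [NormedAddCommGroup E] [InnerProductSpace ℂ E]
    [FiniteDimensional ℂ E] (ρ : Representation ℂ H E)
    (hun : ∀ (h : H) (u v : E), (inner ℂ (ρ h u) (ρ h v) : ℂ) = inner ℂ u v)
    (V : Submodule ℂ E) (hVinv : ∀ (h : H) (w : E), w ∈ V → ρ h w ∈ V)
    (hfixV : ∀ w : E, w ∈ V → (∀ h : H, ρ h w = w) → w = 0) :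
    ∀ ψ ∈ V, (∑ x : G, ρ (f (α * x) * (f x)⁻¹)) ψ = 0 := by
  intro ψ hψ
  have hunV : ∀ (h : H) (u v : V),
      (inner ℂ ((resRep ρ V hVinv) h u) ((resRep ρ V hVinv) h v) : ℂ) = inner ℂ u v := by
    intro h u v
    rw [Submodule.coe_inner, Submodule.coe_inner, resRep_coe, resRep_coe]
    exact hun h _ _
  have hfixV' : ∀ w : V, (∀ h : H, (resRep ρ V hVinv) h w = w) → w = 0 := by
    intro w hw
    have : ∀ h : H, ρ h (w : E) = (w : E) := by
      intro h
      have := congrArg (Subtype.val) (hw h)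
      rwa [resRep_coe] at this
    exact Subtype.ext (hfixV _ w.2 this)
  have hz := lemB χ f hyp hα (Module.finrank ℂ V) V (resRep ρ V hVinv) rfl hunV hfixV'
  rw [LinearMap.sum_apply]
  have hterm : ∀ x : G, ρ (f (α * x) * (f x)⁻¹) ψ
      = ((resRep ρ V hVinv (f (α * x) * (f x)⁻¹)) ⟨ψ, hψ⟩ : E) := fun x => rfl
  simp_rw [hterm]
  rw [← Submodule.coe_sum, ← LinearMap.sum_apply, hz]
  rfl

/-- The left regular representation on `EuclideanSpace ℂ H`. -/
noncomputable def reg (H : Type) [Group H] [Fintype H] :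
    Representation ℂ H (EuclideanSpace ℂ H) where
  toFun h :=
    { toFun := fun ψ => WithLp.toLp 2 (fun x => ψ (h⁻¹ * x))
      map_add' := fun _ _ => rfl
      map_smul' := fun _ _ => rfl }
  map_one' := by
    ext ψ x
    show ψ ((1 : H)⁻¹ * x) = ψ x
    rw [inv_one, one_mul]
  map_mul' a b := by
    ext ψ x
    show ψ ((a * b)⁻¹ * x) = ψ (b⁻¹ * (a⁻¹ * x))
    rw [mul_inv_rev, mul_assoc]

lemma reg_apply (h : H) (ψ : EuclideanSpace ℂ H) (x : H) : reg H h ψ x = ψ (h⁻¹ * x) := rfl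

lemma reg_unitary (h : H) (u v : EuclideanSpace ℂ H) :
    (inner ℂ (reg H h u) (reg H h v) : ℂ) = inner ℂ u v := by
  simp only [PiLp.inner_apply, RCLike.inner_apply]
  exact Fintype.sum_equiv (Equiv.mulLeft h⁻¹) _ _ (fun x => rfl)

/-- Summation functional. -/
noncomputable def sumL (H : Type) [Group H] [Fintype H] : EuclideanSpace ℂ H →ₗ[ℂ] ℂ where
  toFun ψ := ∑ x : H, ψ x
  map_add' ψ φ := by
    show ∑ x : H, (ψ x + φ x) = _
    rw [Finset.sum_add_distrib]
  map_smul' c ψ := by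
    show ∑ x : H, c * ψ x = c * ∑ x : H, ψ x
    rw [Finset.mul_sum]

/-- Evaluation functional. -/
noncomputable def evL (g : H) : EuclideanSpace ℂ H →ₗ[ℂ] ℂ where
  toFun ψ := ψ g
  map_add' _ _ := rfl
  map_smul' _ _ := rfl

lemma sumL_reg (h : H) (ψ : EuclideanSpace ℂ H) : sumL H (reg H h ψ) = sumL H ψ :=
  Fintype.sum_equiv (Equiv.mulLeft h⁻¹) _ _ (fun _ => rfl)

end Stmt15Aux

open Stmt15Aux in
theorem stmt15 {G H : Type} [CommGroup G] [Fintype G] [Group H] [Fintype H]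
    (χ : G ≃* (G →* ℂ)) (f : G → H) :
    IsPerfectNonlinear f ↔
      ∀ (α : G) (W : Type) [NormedAddCommGroup W] [InnerProductSpace ℂ W]
        [FiniteDimensional ℂ W] (ρ : Representation ℂ H W),
        (Nontrivial W ∧
          ∀ U : Submodule ℂ W, (∀ (h : H) (w : W), w ∈ U → ρ h w ∈ U) → U = ⊥ ∨ U = ⊤) →
        (∀ (h : H) (u v : W), (inner ℂ (ρ h u) (ρ h v) : ℂ) = inner ℂ u v) →
        ρ ≠ 1 →
          (∑ x : G, χ α x • ρ (f x)) ∘ₗ LinearMap.adjoint (∑ x : G, χ α x • ρ (f x))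
            = (Fintype.card G : ℂ) • (LinearMap.id : W →ₗ[ℂ] W) := by
  constructor
  · -- forward direction
    intro hpn α W _ _ _ ρ hirr hun hne
    rw [key_expand χ f ρ hun α]
    have hrest : ∀ β : G, β ≠ 1 → χ α β • ∑ y : G, ρ (f (β * y) * (f y)⁻¹) = 0 := by
      intro β hβ
      rw [balanced_sum_eq_zero ρ hirr.2 hne (hpn β hβ), smul_zero]
    rw [Fintype.sum_eq_single (1 : G) hrest]
    rw [map_one, one_smul]
    have : ∀ y : G, ρ (f (1 * y) * (f y)⁻¹) = LinearMap.id := by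
      intro y
      rw [one_mul, mul_inv_cancel, map_one]
      rfl
    simp only [this, Finset.sum_const, Finset.card_univ]
    rw [← Nat.cast_smul_eq_nsmul ℂ]
  · -- backward direction
    intro hyp α hα g
    show Nat.card {x : G // f (α * x) * (f x)⁻¹ = g} * Fintype.card H = Fintype.card G
    classical
    set V0 : Submodule ℂ (EuclideanSpace ℂ H) := LinearMap.ker (sumL H) with hV0
    have hV0inv : ∀ (h : H) (ψ : EuclideanSpace ℂ H), ψ ∈ V0 → reg H h ψ ∈ V0 := by
      intro h ψ hψ
      rw [hV0, LinearMap.mem_ker] at *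
      rw [sumL_reg]
      exact hψ
    have hfixV : ∀ ψ : EuclideanSpace ℂ H, ψ ∈ V0 → (∀ h : H, reg H h ψ = ψ) → ψ = 0 := by
      intro ψ hψ hfixh
      have hconst : ∀ x : H, ψ x = ψ 1 := by
        intro x
        have h2 : ψ (x⁻¹ * x) = ψ x := congrArg (evL x) (hfixh x)
        rw [inv_mul_cancel] at h2
        exact h2.symm
      have hsum : ∑ x : H, ψ x = 0 := LinearMap.mem_ker.mp hψ
      have hsum2 : ∑ x : H, ψ x = (Fintype.card H : ℂ) * ψ 1 := by
        rw [Finset.sum_congr rfl (fun x _ => hconst x), Finset.sum_const, Finset.card_univ,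
          nsmul_eq_mul]
      have h1 : ψ 1 = 0 := by
        have := hsum2.symm.trans hsum
        rcases mul_eq_zero.mp this with hc | hc
        · exact absurd hc (Nat.cast_ne_zero.mpr Fintype.card_ne_zero)
        · exact hc
      ext x
      rw [hconst x, h1]
      rfl
    have hzero' := lemB_sub χ f hyp hα (reg H) reg_unitary V0 hV0inv hfixV
    set e1 : EuclideanSpace ℂ H := EuclideanSpace.single 1 1 with he1def
    set c : EuclideanSpace ℂ H := WithLp.toLp 2 (fun _ => (Fintype.card H : ℂ)⁻¹)
      with hcdef
    have hcardH : (Fintype.card H : ℂ) ≠ 0 := Nat.cast_ne_zero.mpr Fintype.card_ne_zero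
    have hsum_e1 : sumL H e1 = 1 := by
      show ∑ x : H, e1 x = 1
      simp [he1def, EuclideanSpace.single_apply]
    have hsum_c : sumL H c = 1 := by
      show ∑ x : H, c x = 1
      rw [hcdef]
      simp only [PiLp.toLp_apply, Finset.sum_const, Finset.card_univ, nsmul_eq_mul]
      exact mul_inv_cancel₀ hcardH
    have hv : e1 - c ∈ V0 := by
      rw [hV0, LinearMap.mem_ker, map_sub, hsum_e1, hsum_c, sub_self]
    have hregc : ∀ h : H, reg H h c = c := fun h => rfl
    have hmain : ∑ x : G, (reg H (f (α * x) * (f x)⁻¹) e1) g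
        = (Fintype.card G : ℂ) * (Fintype.card H : ℂ)⁻¹ := by
      have hsplit : ∀ x : G, (reg H (f (α * x) * (f x)⁻¹) e1) g
          = c g + (reg H (f (α * x) * (f x)⁻¹) (e1 - c)) g := by
        intro x
        conv_lhs => rw [show e1 = c + (e1 - c) from (add_sub_cancel c e1).symm]
        rw [map_add]
        have : (reg H (f (α * x) * (f x)⁻¹) c) = c := hregc _
        rw [this]
        rfl
      rw [Finset.sum_congr rfl (fun x _ => hsplit x), Finset.sum_add_distrib]
      have hA : ∑ _x : G, c g = (Fintype.card G : ℂ) * (Fintype.card H : ℂ)⁻¹ := by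
        rw [Finset.sum_const, Finset.card_univ, nsmul_eq_mul]
      have hB : ∑ x : G, (reg H (f (α * x) * (f x)⁻¹) (e1 - c)) g = 0 := by
        have h3 : ∑ x : G, (reg H (f (α * x) * (f x)⁻¹) (e1 - c)) g
            = evL g ((∑ x : G, reg H (f (α * x) * (f x)⁻¹)) (e1 - c)) := by
          rw [LinearMap.sum_apply, map_sum (evL g)
            (fun x : G => reg H (f (α * x) * (f x)⁻¹) (e1 - c)) Finset.univ]
          rfl
        rw [h3, hzero' _ hv, map_zero]
      rw [hA, hB, add_zero]
    have hcount : ∑ x : G, (reg H (f (α * x) * (f x)⁻¹) e1) g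
        = (Nat.card {x : G // f (α * x) * (f x)⁻¹ = g} : ℂ) := by
      have hterm : ∀ x : G, (reg H (f (α * x) * (f x)⁻¹) e1) g
          = if f (α * x) * (f x)⁻¹ = g then 1 else 0 := by
        intro x
        rw [reg_apply, he1def]
        simp only [EuclideanSpace.single_apply, inv_mul_eq_one]
      rw [Finset.sum_congr rfl (fun x _ => hterm x), Finset.sum_boole,
        Nat.card_eq_fintype_card, Fintype.card_subtype]
    have hfinal : (Nat.card {x : G // f (α * x) * (f x)⁻¹ = g} : ℂ) * (Fintype.card H)
        = (Fintype.card G) := by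
      rw [← hcount, hmain, mul_assoc, inv_mul_cancel₀ hcardH, mul_one]
    exact_mod_cast hfinal
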